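/- Let r ≥ 1 be an integer and let T be a binary tree of depth r (a rooted tree of height r in which every vertex has at most two children). Then b(T) = r + 1 if and only if T contains T_r as a subtree, where T_1 is the tree on 2 vertices and, for r ≥ 2, T_r is the tree obtained from the perfect binary tree of depth r−1 by attaching one new leaf to each of its 2^{r−1} leaves. -/

import Mathlib

/-- `ball G u k` is `N^k[u]`: the set of vertices `v` reachable from `u`
with `dist_G(u,v) ≤ k`. -/
def ball {V : Type*} (G : SimpleGraph V) (u : V) (k : ℕ) : Set V :=
  {v | G.Reachable u v ∧ G.dist u v ≤ k}

/-- The burning number of `G`: the minimum length `k` of a sequence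
`(x_1, …, x_k)` of vertices with `V(G) = N^{k-1}[x_1] ∪ ⋯ ∪ N^0[x_k]`. -/
noncomputable def burningNumber {V : Type*} (G : SimpleGraph V) : ℕ :=
  sInf {k | ∃ x : Fin k → V, ∀ v : V, ∃ i : Fin k, v ∈ ball G (x i) (k - 1 - (i : ℕ))}

/-- The vertex type of the tree `T_r`: binary strings of length at most `r`
(a string is the sequence of child-choices from the root, most recent first),
where strings of length exactly `r` correspond to the unique new leaf attached to
each leaf of the perfect binary tree of depth `r - 1`, encoded by the choice `false`. -/
abbrev TrVert (r : ℕ) : Type :=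
  {l : List Bool // l.length ≤ r ∧ (l.length = r → l.head? = some false)}

/-- The tree `T_r`: for `r = 1` it is the tree of order `2`, and for `r ≥ 2` it arises
from the perfect binary tree of depth `r - 1` by attaching a new leaf to each of its
`2 ^ (r - 1)` leaves. Two vertices are adjacent iff one is a child of the other. -/
def Tr (r : ℕ) : SimpleGraph (TrVert r) where
  Adj a b := (∃ c : Bool, (b : List Bool) = c :: (a : List Bool)) ∨
             (∃ c : Bool, (a : List Bool) = c :: (b : List Bool))
  symm := ⟨fun a b h => h.symm⟩
  loopless := ⟨by
    intro a h
    have : (a : List Bool).length = (a : List Bool).length + 1 := by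
      rcases h with ⟨c, h⟩ | ⟨c, h⟩ <;> simpa using congrArg List.length h
    omega⟩

namespace BurnAux

/-- length of the longest common prefix -/
def cpLen : List Bool → List Bool → ℕ
  | a :: as, b :: bs => if a = b then cpLen as bs + 1 else 0
  | _, _ => 0

lemma cpLen_le_left : ∀ a b : List Bool, cpLen a b ≤ a.length
  | [], _ => by simp [cpLen]
  | _ :: _, [] => by simp [cpLen]
  | a :: as, b :: bs => by
    by_cases h : a = b <;> simp [cpLen, h]
    exact cpLen_le_left as bs

lemma cpLen_comm : ∀ a b : List Bool, cpLen a b = cpLen b a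
  | [], [] => rfl
  | [], _ :: _ => rfl
  | _ :: _, [] => rfl
  | a :: as, b :: bs => by
    by_cases h : a = b
    · subst h; simp [cpLen, cpLen_comm as bs]
    · have h' : ¬ (b = a) := fun hh => h hh.symm
      simp [cpLen, h, h']

lemma cpLen_le_right (a b : List Bool) : cpLen a b ≤ b.length := by
  rw [cpLen_comm]; exact cpLen_le_left b a

/-- common prefixes are bounded by cpLen -/
lemma le_cpLen_of_prefix : ∀ (l a b : List Bool), l <+: a → l <+: b → l.length ≤ cpLen a b
  | [], a, b, _, _ => by simp
  | x :: xs, a, b, ha, hb => by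
    cases a with
    | nil => exact absurd (List.eq_nil_of_prefix_nil ha) (by simp)
    | cons y ys =>
      cases b with
      | nil => exact absurd (List.eq_nil_of_prefix_nil hb) (by simp)
      | cons z zs =>
        rw [List.cons_prefix_cons] at ha hb
        obtain ⟨rfl, ha2⟩ := ha
        obtain ⟨rfl, hb2⟩ := hb
        simp only [cpLen, List.length_cons, if_true, eq_self_iff_true]
        have := le_cpLen_of_prefix xs ys zs ha2 hb2
        omega

lemma take_cpLen_prefix : ∀ a b : List Bool, a.take (cpLen a b) <+: b
  | [], b => by simp [cpLen]
  | _ :: _, [] => by simp [cpLen]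
  | a :: as, b :: bs => by
    by_cases h : a = b
    · subst h
      simp only [cpLen, if_true, eq_self_iff_true, List.take_succ_cons]
      exact List.cons_prefix_cons.mpr ⟨rfl, take_cpLen_prefix as bs⟩
    · simp [cpLen, h]

end BurnAux

namespace BurnAux

/-- length of the longest common suffix -/
def csLen (a b : List Bool) : ℕ := cpLen a.reverse b.reverse

lemma csLen_le_left (a b : List Bool) : csLen a b ≤ a.length := by
  simpa [csLen] using cpLen_le_left a.reverse b.reverse

lemma csLen_le_right (a b : List Bool) : csLen a b ≤ b.length := by
  simpa [csLen] using cpLen_le_right a.reverse b.reverse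

lemma csLen_comm (a b : List Bool) : csLen a b = csLen b a := cpLen_comm _ _

/-- the graph distance in `T_r` between vertices `a` and `b`, as a formula -/
def dl (a b : List Bool) : ℕ := (a.length - csLen a b) + (b.length - csLen a b)

lemma dl_comm (a b : List Bool) : dl a b = dl b a := by
  unfold dl; rw [csLen_comm]; omega

lemma le_csLen_of_suffix (l a b : List Bool) (ha : l <:+ a) (hb : l <:+ b) :
    l.length ≤ csLen a b := by
  simpa [csLen] using le_cpLen_of_prefix l.reverse a.reverse b.reverse
    (List.reverse_prefix.mpr ha) (List.reverse_prefix.mpr hb)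

/-- the canonical common suffix -/
def csfx (a b : List Bool) : List Bool := (a.reverse.take (csLen a b)).reverse

lemma csfx_length (a b : List Bool) : (csfx a b).length = csLen a b := by
  have := csLen_le_left a b
  simp [csfx]; omega

lemma csfx_suffix_left (a b : List Bool) : csfx a b <:+ a := by
  rw [← List.reverse_prefix]
  simpa [csfx] using List.take_prefix _ _

lemma csfx_suffix_right (a b : List Bool) : csfx a b <:+ b := by
  rw [← List.reverse_prefix]
  simpa [csfx, csLen] using take_cpLen_prefix a.reverse b.reverse

lemma suffix_eq_of_length_eq {s t a : List Bool} (hs : s <:+ a) (ht : t <:+ a)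
    (h : s.length = t.length) : s = t := by
  obtain ⟨us, rfl⟩ := hs
  obtain ⟨ut, het⟩ := ht
  have hu : us.length = ut.length := by
    have := congrArg List.length het
    simp at this ⊢; omega
  have := congrArg (List.drop us.length) het
  rw [List.drop_left, hu, List.drop_left] at this
  exact this.symm

lemma dl_eq_zero_iff (a b : List Bool) : dl a b = 0 ↔ a = b := by
  constructor
  · intro h
    have h1 := csLen_le_left a b
    have h2 := csLen_le_right a b
    unfold dl at h
    have ha : (csfx a b).length = a.length := by rw [csfx_length]; omega
    have hb : (csfx a b).length = b.length := by rw [csfx_length]; omega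
    have ea : csfx a b = a := List.IsSuffix.eq_of_length (csfx_suffix_left a b) ha
    have eb : csfx a b = b := List.IsSuffix.eq_of_length (csfx_suffix_right a b) hb
    exact ea.symm.trans eb
  · rintro rfl
    have : csLen a a = a.length := le_antisymm (csLen_le_left a a)
      (le_csLen_of_suffix a a a (List.suffix_refl a) (List.suffix_refl a))
    unfold dl; omega

end BurnAux

namespace BurnAux

lemma csLen_concat (a b : List Bool) (z : Bool) :
    csLen (a ++ [z]) (b ++ [z]) = csLen a b + 1 := by
  unfold csLen
  simp [cpLen]

lemma csLen_concat_ne (a b : List Bool) {z z' : Bool} (h : z ≠ z') :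
    csLen (a ++ [z]) (b ++ [z']) = 0 := by
  unfold csLen
  simp [cpLen, h]

lemma csLen_nil_left (b : List Bool) : csLen [] b = 0 := by
  unfold csLen
  cases b.reverse <;> simp [cpLen]

lemma dl_nil_left (b : List Bool) : dl [] b = b.length := by
  unfold dl
  rw [csLen_nil_left]; simp

lemma dl_concat (a b : List Bool) (z : Bool) : dl (a ++ [z]) (b ++ [z]) = dl a b := by
  unfold dl
  rw [csLen_concat]
  have h1 := csLen_le_left a b
  have h2 := csLen_le_right a b
  simp only [List.length_append, List.length_cons, List.length_nil]
  omega

lemma dl_concat_ne (a b : List Bool) {z z' : Bool} (h : z ≠ z') :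
    dl (a ++ [z]) (b ++ [z']) = a.length + b.length + 2 := by
  unfold dl
  rw [csLen_concat_ne _ _ h]
  simp; omega

/-- all boolean lists of length `n` -/
def listsLen : ℕ → Finset (List Bool)
  | 0 => {[]}
  | n + 1 => ((listsLen n).image (true :: ·)) ∪ ((listsLen n).image (false :: ·))

lemma mem_listsLen : ∀ (n : ℕ) (w : List Bool), w ∈ listsLen n ↔ w.length = n
  | 0, w => by
    constructor
    · intro h; simp [listsLen] at h; simp [h]
    · intro h; simp [listsLen]; exact List.eq_nil_of_length_eq_zero h
  | n + 1, w => by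
    constructor
    · intro h
      simp only [listsLen, Finset.mem_union, Finset.mem_image] at h
      rcases h with ⟨a, ha, rfl⟩ | ⟨a, ha, rfl⟩ <;>
        simp [(mem_listsLen n a).mp ha]
    · intro h
      cases w with
      | nil => simp at h
      | cons c cs =>
        have : cs ∈ listsLen n := (mem_listsLen n cs).mpr (by simpa using h)
        simp only [listsLen, Finset.mem_union, Finset.mem_image]
        cases c
        · exact Or.inr ⟨cs, this, rfl⟩
        · exact Or.inl ⟨cs, this, rfl⟩

lemma card_listsLen : ∀ n : ℕ, (listsLen n).card = 2 ^ n
  | 0 => rfl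
  | n + 1 => by
    have hinj : ∀ z : Bool, Function.Injective (fun l : List Bool => z :: l) := by
      intro z a b h; simpa using h
    have hdisj : Disjoint ((listsLen n).image (true :: ·)) ((listsLen n).image (false :: ·)) := by
      rw [Finset.disjoint_left]
      rintro a ha hb
      simp only [Finset.mem_image] at ha hb
      obtain ⟨x, _, rfl⟩ := ha
      obtain ⟨y, _, h⟩ := hb
      simp at h
    rw [listsLen, Finset.card_union_of_disjoint hdisj,
      Finset.card_image_of_injective _ (hinj true),
      Finset.card_image_of_injective _ (hinj false), card_listsLen n]
    ring

/-- the deep vertices of `T_r` : all strings of length `r-1`, together with the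
pendants, strings of length `r` starting with `false`. -/
def Dfin (r : ℕ) : Finset (List Bool) :=
  listsLen (r - 1) ∪ (listsLen (r - 1)).image (false :: ·)

lemma mem_Dfin {r : ℕ} (hr : 1 ≤ r) (w : List Bool) :
    w ∈ Dfin r ↔ (w.length = r - 1 ∨ (w.length = r ∧ w.head? = some false)) := by
  unfold Dfin
  simp only [Finset.mem_union, Finset.mem_image, mem_listsLen]
  constructor
  · rintro (h | ⟨a, ha, rfl⟩)
    · exact Or.inl h
    · exact Or.inr ⟨by simp [ha]; omega, rfl⟩
  · rintro (h | ⟨hl, hh⟩)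
    · exact Or.inl h
    · cases w with
      | nil => simp at hh
      | cons c cs =>
        right
        simp at hh
        subst hh
        exact ⟨cs, by simp at hl; omega, rfl⟩

lemma card_Dfin {r : ℕ} (hr : 1 ≤ r) : (Dfin r).card = 2 ^ r := by
  have hdisj : Disjoint (listsLen (r - 1)) ((listsLen (r - 1)).image (false :: ·)) := by
    rw [Finset.disjoint_left]
    intro a ha hb
    simp only [Finset.mem_image, mem_listsLen] at ha hb
    obtain ⟨x, hx, rfl⟩ := hb
    simp at ha; omega
  rw [Dfin, Finset.card_union_of_disjoint hdisj,
    Finset.card_image_of_injective _ (fun a b h => by simpa using h : Function.Injective (false :: ·)),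
    card_listsLen]
  have h2 : 2 ^ (r - 1) + 2 ^ (r - 1) = 2 ^ (r - 1 + 1) := by rw [pow_succ]; ring
  rw [h2]
  congr 1
  omega

end BurnAux

namespace BurnAux

lemma exists_concat_of_ne_nil {w : List Bool} (h : w ≠ []) :
    ∃ (w' : List Bool) (z : Bool), w = w' ++ [z] := by
  cases hw : w.reverse with
  | nil => exact absurd (by simpa using congrArg List.reverse hw) h
  | cons c t =>
    refine ⟨t.reverse, c, ?_⟩
    have := congrArg List.reverse hw
    simpa using this

lemma mem_Dfin_concat {n : ℕ} (hn : 1 ≤ n) (w' : List Bool) (z : Bool) :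
    (w' ++ [z]) ∈ Dfin (n + 1) ↔ w' ∈ Dfin n := by
  rw [mem_Dfin (by omega), mem_Dfin hn]
  cases w' with
  | nil =>
    simp only [List.nil_append, List.length_cons, List.length_nil, List.head?]
    constructor
    · rintro (h | ⟨h, _⟩)
      · left; omega
      · omega
    · rintro (h | ⟨h, _⟩)
      · left; omega
      · omega
  | cons c cs =>
    simp only [List.cons_append, List.length_cons, List.length_append,
      List.length_nil, List.head?_cons]
    constructor
    · rintro (h | ⟨h, hh⟩)
      · left; omega
      · right; exact ⟨by omega, hh⟩
    · rintro (h | ⟨h, hh⟩)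
      · left; omega
      · right; exact ⟨by omega, hh⟩

lemma length_of_mem_Dfin {r : ℕ} (hr : 1 ≤ r) {w : List Bool} (hw : w ∈ Dfin r) :
    w.length = r - 1 ∨ w.length = r := by
  rcases (mem_Dfin hr w).mp hw with h | ⟨h, _⟩
  · exact Or.inl h
  · exact Or.inr h

/-- The key counting lemma: a ball of radius `j` around any vertex contains at most
`2^j` deep vertices. -/
lemma cnt : ∀ r : ℕ, 1 ≤ r → ∀ g : List Bool, g.length ≤ r → ∀ j : ℕ,
    ((Dfin r).filter (fun w => dl g w ≤ j)).card ≤ 2 ^ j := by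
  intro r
  induction r with
  | zero => omega
  | succ n ih =>
    intro _ g hg j
    by_cases hj : n + 1 ≤ j
    · calc ((Dfin (n+1)).filter (fun w => dl g w ≤ j)).card
          ≤ (Dfin (n+1)).card := Finset.card_filter_le _ _
        _ = 2 ^ (n+1) := card_Dfin (by omega)
        _ ≤ 2 ^ j := Nat.pow_le_pow_right (by omega) hj
    push_neg at hj
    rcases Nat.eq_zero_or_pos j with rfl | hj1
    · -- j = 0 : ball is a single vertex
      have hsub : (Dfin (n+1)).filter (fun w => dl g w ≤ 0) ⊆ {g} := by
        intro w hw
        simp only [Finset.mem_filter] at hw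
        have : dl g w = 0 := by omega
        have : g = w := (dl_eq_zero_iff g w).mp this
        simp [this]
      calc _ ≤ ({g} : Finset (List Bool)).card := Finset.card_le_card hsub
        _ = 1 := Finset.card_singleton g
        _ ≤ 2 ^ 0 := le_rfl
    -- now 1 ≤ j ≤ n, hence n ≥ 1
    have hn1 : 1 ≤ n := by omega
    rcases eq_or_ne g [] with rfl | hgne
    · -- centre at the root
      by_cases hjn : j = n
      · have hsub : (Dfin (n+1)).filter (fun w => dl [] w ≤ j) ⊆ listsLen n := by
          intro w hw
          simp only [Finset.mem_filter] at hw
          rw [dl_nil_left] at hw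
          rcases length_of_mem_Dfin (by omega) hw.1 with h | h
          · rw [mem_listsLen]; omega
          · omega
        calc _ ≤ (listsLen n).card := Finset.card_le_card hsub
          _ = 2 ^ n := card_listsLen n
          _ = 2 ^ j := by rw [hjn]
      · have hsub : (Dfin (n+1)).filter (fun w => dl [] w ≤ j) = ∅ := by
          rw [Finset.eq_empty_iff_forall_notMem]
          intro w hw
          simp only [Finset.mem_filter] at hw
          rw [dl_nil_left] at hw
          rcases length_of_mem_Dfin (by omega) hw.1 with h | h <;> omega
        rw [hsub]
        simp
    · -- centre on one of the two branches
      obtain ⟨g', z, rfl⟩ := exists_concat_of_ne_nil hgne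
      have hsub : (Dfin (n+1)).filter (fun w => dl (g' ++ [z]) w ≤ j) ⊆
          ((Dfin n).filter (fun w => dl g' w ≤ j)).image (· ++ [z]) := by
        intro w hw
        simp only [Finset.mem_filter] at hw
        have hwne : w ≠ [] := by
          intro h
          subst h
          rcases length_of_mem_Dfin (by omega) hw.1 with hl | hl <;> simp at hl <;> omega
        obtain ⟨w', z', rfl⟩ := exists_concat_of_ne_nil hwne
        have hz : z' = z := by
          by_contra hne
          rw [dl_concat_ne _ _ (fun h => hne h.symm)] at hw
          have : w'.length + 1 = n ∨ w'.length + 1 = n + 1 := by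
            rcases length_of_mem_Dfin (by omega) hw.1 with h | h <;> simp at h <;> omega
          omega
        subst hz
        rw [Finset.mem_image]
        refine ⟨w', ?_, rfl⟩
        simp only [Finset.mem_filter]
        rw [dl_concat] at hw
        exact ⟨(mem_Dfin_concat hn1 w' z').mp hw.1, hw.2⟩
      calc _ ≤ (((Dfin n).filter (fun w => dl g' w ≤ j)).image (· ++ [z])).card :=
            Finset.card_le_card hsub
        _ = ((Dfin n).filter (fun w => dl g' w ≤ j)).card :=
            Finset.card_image_of_injective _ (fun a b h => by simpa using h)
        _ ≤ 2 ^ j := ih hn1 g' (by simp at hg; omega) j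

end BurnAux
section part2
namespace BurnAux

open SimpleGraph

/-- appending paths whose supports meet only at the junction -/
lemma isPath_append {V : Type*} {G : SimpleGraph V} {u v w : V} {p : G.Walk u v}
    {q : G.Walk v w} (hp : p.IsPath) (hq : q.IsPath)
    (h : ∀ y, y ∈ p.support → y ∈ q.support → y = v) : (p.append q).IsPath := by
  rw [Walk.isPath_def, Walk.support_append]
  have hq' := hq.support_nodup
  rw [q.support_eq_cons] at hq'
  rw [List.nodup_cons] at hq'
  apply List.Nodup.append hp.support_nodup hq'.2
  intro y hy1 hy2
  have : y = v := h y hy1 (List.mem_of_mem_tail hy2)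
  subst this
  exact hq'.1 hy2

/-- in a tree, every path is a geodesic -/
lemma tree_path_length {V : Type*} {G : SimpleGraph V} (hG : G.IsTree) {u v : V}
    {p : G.Walk u v} (hp : p.IsPath) : p.length = G.dist u v := by
  obtain ⟨q, hq, hlen⟩ := hG.isConnected.exists_path_of_dist u v
  have := (hG.existsUnique_path u v).unique hp hq
  rw [this, hlen]

end BurnAux
end part2
section part3
namespace BurnAux

open SimpleGraph

/-- validity predicate for vertices of `T_r` -/
abbrev validL (r : ℕ) (l : List Bool) : Prop :=
  l.length ≤ r ∧ (l.length = r → l.head? = some false)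

lemma valid_of_suffix {r : ℕ} {s a : List Bool} (h : s <:+ a) (ha : validL r a) :
    validL r s := by
  have hls : s.length ≤ a.length := h.length_le
  refine ⟨le_trans hls ha.1, fun hs => ?_⟩
  have hs' : s = a := h.eq_of_length (by omega)
  rw [hs']
  exact ha.2 (by omega)

/-- the upward walk in `T_r` from `p ++ s` to `s` -/
def walkUp (r : ℕ) : (p s : List Bool) → (h : validL r (p ++ s)) →
    (Tr r).Walk ⟨p ++ s, h⟩ ⟨s, valid_of_suffix ⟨p, rfl⟩ h⟩
  | [], s, h => Walk.nil
  | c :: p, s, h =>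
    Walk.cons (show (Tr r).Adj ⟨(c :: p) ++ s, h⟩
        ⟨p ++ s, valid_of_suffix ⟨[c], rfl⟩ h⟩ from Or.inr ⟨c, rfl⟩)
      (walkUp r p s (valid_of_suffix ⟨[c], rfl⟩ h))

lemma length_walkUp (r : ℕ) : ∀ (p s : List Bool) (h : validL r (p ++ s)),
    (walkUp r p s h).length = p.length
  | [], s, h => rfl
  | c :: p, s, h => by
    simp [walkUp, length_walkUp r p s _]

lemma support_walkUp (r : ℕ) : ∀ (p s : List Bool) (h : validL r (p ++ s)),
    ∀ y ∈ (walkUp r p s h).support, s <:+ y.val ∧ y.val <:+ (p ++ s)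
  | [], s, h => by
    intro y hy
    simp [walkUp] at hy
    subst hy
    simp
  | c :: p, s, h => by
    intro y hy
    rw [walkUp, Walk.support_cons] at hy
    rcases List.mem_cons.mp hy with rfl | hy
    · exact ⟨⟨c :: p, rfl⟩, List.suffix_refl _⟩
    · obtain ⟨h1, h2⟩ := support_walkUp r p s _ y hy
      exact ⟨h1, h2.trans ⟨[c], rfl⟩⟩

lemma isPath_walkUp (r : ℕ) : ∀ (p s : List Bool) (h : validL r (p ++ s)),
    (walkUp r p s h).IsPath
  | [], s, h => by simp [walkUp]
  | c :: p, s, h => by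
    rw [walkUp]
    apply Walk.IsPath.cons (isPath_walkUp r p s _)
    intro hy
    obtain ⟨-, h2⟩ := support_walkUp r p s _ _ hy
    have := h2.length_le
    simp at this

/-- a geodesic path between any two vertices of `T_r`, of length `dl` -/
lemma exists_geo (r : ℕ) (u w : TrVert r) :
    ∃ q : (Tr r).Walk u w, q.IsPath ∧ q.length = dl u.val w.val := by
  obtain ⟨pu, hpu⟩ := csfx_suffix_left u.val w.val
  obtain ⟨pw, hpw⟩ := csfx_suffix_right u.val w.val
  set s := csfx u.val w.val with hs
  have hu : validL r (pu ++ s) := by rw [hpu]; exact u.2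
  have hw : validL r (pw ++ s) := by rw [hpw]; exact w.2
  have hvu : (⟨pu ++ s, hu⟩ : TrVert r) = u := Subtype.ext hpu
  have hvw : (⟨pw ++ s, hw⟩ : TrVert r) = w := Subtype.ext hpw
  have hmid : (⟨s, valid_of_suffix ⟨pu, rfl⟩ hu⟩ : TrVert r)
      = ⟨s, valid_of_suffix ⟨pw, rfl⟩ hw⟩ := Subtype.ext rfl
  refine ⟨(((walkUp r pu s hu).copy hvu rfl).append
    (((walkUp r pw s hw).copy hvw rfl).reverse.copy (by rw [hmid]) rfl)), ?_, ?_⟩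
  · apply isPath_append
    · exact (SimpleGraph.Walk.isPath_copy _ _ _).mpr (isPath_walkUp r pu s hu)
    · exact (SimpleGraph.Walk.isPath_copy _ _ _).mpr
        ((SimpleGraph.Walk.isPath_copy _ _ _).mpr (isPath_walkUp r pw s hw)).reverse
    · intro y hy1 hy2
      rw [Walk.support_copy] at hy1 hy2
      rw [Walk.support_reverse, List.mem_reverse, Walk.support_copy] at hy2
      obtain ⟨hs1, hs2⟩ := support_walkUp r pu s hu y hy1
      obtain ⟨hs3, hs4⟩ := support_walkUp r pw s hw y hy2
      rw [hpu] at hs2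
      rw [hpw] at hs4
      have hle : y.val.length ≤ csLen u.val w.val :=
        le_csLen_of_suffix _ _ _ hs2 hs4
      have hge : s.length ≤ y.val.length := hs1.length_le
      rw [csfx_length] at hge
      have hcs : s.length = csLen u.val w.val := csfx_length _ _
      have : y.val = s := suffix_eq_of_length_eq hs2
        (csfx_suffix_left u.val w.val) (by omega)
      exact Subtype.ext this
  · rw [Walk.length_append, Walk.length_copy, Walk.length_copy, Walk.length_reverse,
      Walk.length_copy, length_walkUp, length_walkUp]
    have hcs : s.length = csLen u.val w.val := csfx_length _ _
    have h1 : pu.length + csLen u.val w.val = u.val.length := by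
      have := congrArg List.length hpu
      rw [List.length_append] at this
      omega
    have h2 : pw.length + csLen u.val w.val = w.val.length := by
      have := congrArg List.length hpw
      rw [List.length_append] at this
      omega
    have h3 := csLen_le_left u.val w.val
    have h4 := csLen_le_right u.val w.val
    unfold dl
    omega

end BurnAux
end part3
section part4
namespace BurnAux

open SimpleGraph

lemma gsum : ∀ r : ℕ, ((Finset.range r).sum (fun i => 2 ^ (r - 1 - i))) = 2 ^ r - 1
  | 0 => rfl
  | r + 1 => by
    rw [Finset.sum_range_succ]
    have h1 : ∀ i ∈ Finset.range r, 2 ^ (r + 1 - 1 - i) = 2 * 2 ^ (r - 1 - i) := by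
      intro i hi
      rw [Finset.mem_range] at hi
      rw [← pow_succ']
      congr 1
      omega
    rw [Finset.sum_congr rfl h1, ← Finset.mul_sum, gsum r]
    have : 1 ≤ 2 ^ r := Nat.one_le_two_pow
    have h2 : r + 1 - 1 - r = 0 := by omega
    rw [h2, pow_zero, pow_succ]
    omega

/-- the vertex `[]` of `T_r` -/
def rootTr (r : ℕ) (hr : 1 ≤ r) : TrVert r :=
  ⟨[], by constructor <;> simp <;> omega⟩

/-- the gate lemma: distances from an outside point into the image of `T_r`
decompose through the nearest point of the image. -/
lemma gate {V : Type*} {T : SimpleGraph V} (hT : T.IsTree) {r : ℕ} (hr : 1 ≤ r)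
    (f : Tr r →g T) (hf : Function.Injective f) (z : V) :
    ∃ g : TrVert r, ∀ u : TrVert r,
      T.dist z (f u) = T.dist z (f g) + dl g.val u.val := by
  classical
  have hne : Nonempty (TrVert r) := ⟨rootTr r hr⟩
  have hmem := Nat.sInf_mem (Set.range_nonempty (fun w : TrVert r => T.dist z (f w)))
  obtain ⟨g, hg⟩ := hmem
  refine ⟨g, fun u => ?_⟩
  obtain ⟨p, hp, hplen⟩ := hT.isConnected.exists_path_of_dist z (f g)
  obtain ⟨q0, hq0, hq0len⟩ := exists_geo r g u
  have hq : (q0.map f).IsPath := Walk.map_isPath_of_injective hf hq0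
  have hqlen : (q0.map f).length = dl g.val u.val := by
    rw [Walk.length_map, hq0len]
  have hjunc : ∀ y, y ∈ p.support → y ∈ (q0.map f).support → y = f g := by
    intro y hy1 hy2
    rw [Walk.support_map, List.mem_map] at hy2
    obtain ⟨u', _, rfl⟩ := hy2
    have h1 : T.dist z (f u') ≤ (p.takeUntil _ hy1).length := dist_le _
    have h2 : T.dist (f u') (f g) ≤ (p.dropUntil _ hy1).length := dist_le _
    have h3 : (p.takeUntil _ hy1).length + (p.dropUntil _ hy1).length = p.length := by
      have := congrArg Walk.length (p.take_spec hy1)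
      rwa [Walk.length_append] at this
    have h4 : T.dist z (f g) ≤ T.dist z (f u') :=
      le_trans (le_of_eq hg) (Nat.sInf_le ⟨u', rfl⟩)
    have h5 : T.dist (f u') (f g) = 0 := by omega
    have := (hT.isConnected.dist_eq_zero_iff).mp h5
    rw [this]
  have hpath : (p.append (q0.map f)).IsPath := isPath_append hp hq hjunc
  have := tree_path_length hT hpath
  rw [Walk.length_append, hplen, hqlen] at this
  exact this.symm

/-- Direction (a): if `T_r` embeds then there is no burning cover with radii
`r-1, r-2, …, 0`. -/
lemma no_cover {V : Type*} {T : SimpleGraph V} (hT : T.IsTree) {r : ℕ} (hr : 1 ≤ r)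
    (f : Tr r →g T) (hf : Function.Injective f) (x : Fin r → V)
    (hx : ∀ v : V, ∃ i : Fin r, T.dist (x i) v ≤ r - 1 - (i : ℕ)) : False := by
  choose g hg using fun i : Fin r => gate hT hr f hf (x i)
  set j : Fin r → ℕ := fun i => (r - 1 - (i : ℕ)) - T.dist (x i) (f (g i)) with hj
  have hcov : Dfin r ⊆ Finset.univ.biUnion
      (fun i : Fin r => (Dfin r).filter (fun w => dl (g i).val w ≤ j i)) := by
    intro w hw
    have hwv : validL r w := by
      rcases (mem_Dfin hr w).mp hw with h | ⟨h1, h2⟩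
      · exact ⟨by omega, fun hh => by omega⟩
      · exact ⟨by omega, fun _ => h2⟩
    obtain ⟨i, hi⟩ := hx (f ⟨w, hwv⟩)
    have hi' : T.dist (x i) (f (g i)) + dl (g i).val w ≤ r - 1 - (i : ℕ) := by
      rw [← (hg i ⟨w, hwv⟩ : T.dist (x i) (f ⟨w, hwv⟩)
        = T.dist (x i) (f (g i)) + dl (g i).val w)]
      exact hi
    rw [Finset.mem_biUnion]
    refine ⟨i, Finset.mem_univ i, ?_⟩
    rw [Finset.mem_filter]
    refine ⟨hw, ?_⟩
    simp only [hj]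
    omega
  have hcard : (Dfin r).card ≤ Finset.univ.sum
      (fun i : Fin r => ((Dfin r).filter (fun w => dl (g i).val w ≤ j i)).card) :=
    le_trans (Finset.card_le_card hcov) (Finset.card_biUnion_le)
  have hbound : ∀ i : Fin r, ((Dfin r).filter (fun w => dl (g i).val w ≤ j i)).card
      ≤ 2 ^ (r - 1 - (i : ℕ)) := by
    intro i
    calc _ ≤ 2 ^ (j i) := cnt r hr (g i).val (g i).2.1 (j i)
      _ ≤ 2 ^ (r - 1 - (i : ℕ)) := Nat.pow_le_pow_right (by omega)
          (by simp only [hj]; exact Nat.sub_le _ _)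
  have hsum : Finset.univ.sum (fun i : Fin r => 2 ^ (r - 1 - (i : ℕ))) = 2 ^ r - 1 := by
    rw [Fin.sum_univ_eq_sum_range (fun i => 2 ^ (r - 1 - i)) r]
    exact gsum r
  have h1 : (Dfin r).card = 2 ^ r := card_Dfin hr
  have h2 : Finset.univ.sum
      (fun i : Fin r => ((Dfin r).filter (fun w => dl (g i).val w ≤ j i)).card)
      ≤ 2 ^ r - 1 := by
    rw [← hsum]
    exact Finset.sum_le_sum (fun i _ => hbound i)
  have : 1 ≤ 2 ^ r := Nat.one_le_two_pow
  omega

end BurnAux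
end part4
section part5
namespace BurnAux

open SimpleGraph

variable {V : Type*} {T : SimpleGraph V} {root : V}

/-- `c` is a child of `u` in the tree rooted at `root` -/
def child (T : SimpleGraph V) (root u c : V) : Prop :=
  T.Adj u c ∧ T.dist root c = T.dist root u + 1

/-- `v` lies in the subtree below `u` -/
def inSub (T : SimpleGraph V) (root u v : V) : Prop :=
  T.dist root v = T.dist root u + T.dist u v

/-- `u` roots a full binary subtree of depth `k` -/
def Full (T : SimpleGraph V) (root : V) : ℕ → V → Prop
  | 0, _ => True
  | 1, u => ∃ c, child T root u c
  | (k + 2), u => ∃ c1 c2, child T root u c1 ∧ child T root u c2 ∧ c1 ≠ c2 ∧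
      Full T root (k + 1) c1 ∧ Full T root (k + 1) c2

lemma inSub_self (u : V) : inSub T root u u := by
  unfold inSub
  rw [SimpleGraph.dist_self]
  omega

lemma dist_le_one_of_adj (hT : T.IsTree) {u c : V} (h : T.Adj u c) : T.dist u c ≤ 1 :=
  le_trans (dist_le (Walk.cons h Walk.nil)) (by simp)

lemma inSub_child (hT : T.IsTree) {u c : V} (h : child T root u c) : inSub T root u c := by
  unfold inSub
  have h1 : T.dist u c ≤ 1 := dist_le_one_of_adj hT h.1
  have h2 : T.dist root c ≤ T.dist root u + T.dist u c := hT.isConnected.dist_triangle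
  have h3 := h.2
  omega

lemma inSub_trans (hT : T.IsTree) {u c v : V} (hc : child T root u c)
    (hv : inSub T root c v) : inSub T root u v ∧ T.dist u v = T.dist c v + 1 := by
  have t1 : T.dist root v ≤ T.dist root u + T.dist u v := hT.isConnected.dist_triangle
  have t2 : T.dist u v ≤ T.dist u c + T.dist c v := hT.isConnected.dist_triangle
  have t3 : T.dist u c ≤ 1 := dist_le_one_of_adj hT hc.1
  have h2 := hc.2
  unfold inSub at hv ⊢
  omega

lemma step_down (hT : T.IsTree) {u v : V} (hv : inSub T root u v) (hne : v ≠ u) :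
    ∃ c, child T root u c ∧ inSub T root c v ∧ T.dist c v + 1 = T.dist u v := by
  have hreach : T.Reachable u v := hT.isConnected u v
  obtain ⟨p, hp, hplen⟩ := hT.isConnected.exists_path_of_dist u v
  have hd0 : T.dist u v ≠ 0 := fun h =>
    hne ((hT.isConnected.dist_eq_zero_iff).mp h).symm
  cases p with
  | nil => rw [← hplen] at hd0; simp at hd0
  | @cons _ c _ hadj q =>
    refine ⟨c, ?_, ?_, ?_⟩
    · constructor
      · exact hadj
      · have t1 : T.dist root c ≤ T.dist root u + T.dist u c := hT.isConnected.dist_triangle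
        have t2 : T.dist root v ≤ T.dist root c + T.dist c v := hT.isConnected.dist_triangle
        have t3 : T.dist u c ≤ 1 := dist_le_one_of_adj hT hadj
        have t4 : T.dist c v ≤ q.length := dist_le q
        have t5 : T.dist u v ≤ 1 + T.dist c v := by
          have := hT.isConnected.dist_triangle (u := u) (v := c) (w := v)
          omega
        rw [Walk.length_cons] at hplen
        unfold inSub at hv
        omega
    · have t2 : T.dist root v ≤ T.dist root c + T.dist c v := hT.isConnected.dist_triangle
      have t1 : T.dist root c ≤ T.dist root u + T.dist u c := hT.isConnected.dist_triangle
      have t3 : T.dist u c ≤ 1 := dist_le_one_of_adj hT hadj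
      have t4 : T.dist c v ≤ q.length := dist_le q
      have t5 : T.dist u v ≤ 1 + T.dist c v := by
        have := hT.isConnected.dist_triangle (u := u) (v := c) (w := v)
        omega
      rw [Walk.length_cons] at hplen
      unfold inSub at hv ⊢
      omega
    · have t4 : T.dist c v ≤ q.length := dist_le q
      have t3 : T.dist u c ≤ 1 := dist_le_one_of_adj hT hadj
      have t5 : T.dist u v ≤ 1 + T.dist c v := by
        have := hT.isConnected.dist_triangle (u := u) (v := c) (w := v)
        omega
      rw [Walk.length_cons] at hplen
      omega

/-- if the subtree below `u` has depth at most `k` and is not full, it can be covered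
by balls of radii `k-1, …, 0`. -/
lemma coverSub [Fintype V] (hT : T.IsTree)
    (hbin : ∀ v : V, {u : V | T.Adj v u ∧ T.dist root u = T.dist root v + 1}.ncard ≤ 2) :
    ∀ k u, (∀ v, inSub T root u v → T.dist u v ≤ k) → ¬ Full T root k u →
    ∃ x : Fin k → V, ∀ v, inSub T root u v → ∃ i : Fin k, T.dist (x i) v ≤ k - 1 - (i : ℕ) := by
  intro k
  induction k using Nat.strong_induction_on with
  | _ k ih =>
    intro u hdep hnf
    match k with
    | 0 => exact absurd trivial hnf
    | (k' + 1) =>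
      set C := {c : V | child T root u c} with hC
      have hCfin : C.Finite := Set.toFinite C
      by_cases hC0 : C = ∅
      · -- no children: subtree is {u}
        refine ⟨fun _ => u, fun v hv => ?_⟩
        rcases eq_or_ne v u with rfl | hne
        · exact ⟨⟨0, by omega⟩, by rw [SimpleGraph.dist_self]; omega⟩
        · obtain ⟨c, hc, -, -⟩ := step_down hT hv hne
          exact absurd (hC ▸ hc : c ∈ C) (by rw [hC0]; simp)
      · have hCne : C.Nonempty := Set.nonempty_iff_ne_empty.mpr hC0
        match k' with
        | 0 =>
          obtain ⟨c, hc⟩ := hCne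
          exact absurd ⟨c, hc⟩ hnf
        | (m + 1) =>
          -- k = m + 2
          have hcard := hbin u
          have hcard' : C.ncard ≤ 2 := hcard
          have hpos : 0 < C.ncard := (Set.ncard_pos hCfin).mpr hCne
          -- helper covering lemma given a distinguished pair
          have main : ∀ a b : V, (∀ c, c ∈ C → c = a ∨ c = b) → a ∈ C → b ∈ C →
              ¬ Full T root (m + 1) b →
              ∃ x : Fin (m + 2) → V, ∀ v, inSub T root u v →
                ∃ i : Fin (m + 2), T.dist (x i) v ≤ (m + 2) - 1 - (i : ℕ) := by
            intro a b hab ha hb hnfb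
            have hdepb : ∀ v, inSub T root b v → T.dist b v ≤ m + 1 := by
              intro v hv
              obtain ⟨h1, h2⟩ := inSub_trans hT hb hv
              have := hdep v h1
              omega
            obtain ⟨y, hy⟩ := ih (m + 1) (by omega) b hdepb hnfb
            refine ⟨Fin.cases a y, fun v hv => ?_⟩
            rcases eq_or_ne v u with heq | hne
            · refine ⟨0, ?_⟩
              have h1 : T.dist a u ≤ 1 := by
                rw [SimpleGraph.dist_comm]
                exact dist_le_one_of_adj hT ha.1
              rw [heq]
              simpa using (by omega : T.dist a u ≤ m + 2 - 1 - 0)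
            · obtain ⟨c, hc, hcv, hcd⟩ := step_down hT hv hne
              rcases hab c hc with rfl | rfl
              · refine ⟨0, ?_⟩
                have h2 := hdep v hv
                simpa using (by omega : T.dist c v ≤ m + 2 - 1 - 0)
              · obtain ⟨i, hi⟩ := hy v hcv
                refine ⟨i.succ, ?_⟩
                have hcast : (Fin.cases a y : Fin (m+2) → V) i.succ = y i := by simp
                rw [hcast]
                have : ((i.succ : Fin (m + 2)) : ℕ) = (i : ℕ) + 1 := by simp
                rw [this]
                omega
          -- now split on the number of children
          interval_cases h : C.ncard
          · -- one child
            obtain ⟨c, hc⟩ := (Set.ncard_eq_one).mp h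
            have hcC : c ∈ C := by rw [hc]; rfl
            refine ⟨fun _ => c, fun v hv => ?_⟩
            rcases eq_or_ne v u with heq | hne
            · refine ⟨0, ?_⟩
              have h1 : T.dist c u ≤ 1 := by
                rw [SimpleGraph.dist_comm]
                exact dist_le_one_of_adj hT hcC.1
              rw [heq]
              simpa using (by omega : T.dist c u ≤ m + 2 - 1 - 0)
            · obtain ⟨c', hc', hcv, hcd⟩ := step_down hT hv hne
              have : c' = c := by
                have : c' ∈ ({c} : Set V) := hc ▸ hc'
                simpa using this
              subst this
              refine ⟨0, ?_⟩
              have h2 := hdep v hv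
              simpa using (by omega : T.dist c' v ≤ m + 2 - 1 - 0)
          · -- two children
            obtain ⟨a, b, hne, hab⟩ := (Set.ncard_eq_two).mp h
            have haC : a ∈ C := by rw [hab]; left; rfl
            have hbC : b ∈ C := by rw [hab]; right; rfl
            have hmem : ∀ c, c ∈ C → c = a ∨ c = b := by
              intro c hc
              have : c ∈ ({a, b} : Set V) := hab ▸ hc
              simpa using this
            have hnfab : ¬ Full T root (m + 1) a ∨ ¬ Full T root (m + 1) b := by
              by_contra hcon
              push_neg at hcon
              exact hnf ⟨a, b, haC, hbC, hne, hcon.1, hcon.2⟩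
            rcases hnfab with hnfa | hnfb
            · exact main b a (fun c hc => (hmem c hc).symm) hbC haC hnfa
            · exact main a b hmem haC hbC hnfb

end BurnAux
end part5
section part6
namespace BurnAux

open SimpleGraph

variable {V : Type*} {T : SimpleGraph V} {root : V}

lemma depth_support_le (hT : T.IsTree) {u y : V} {p : T.Walk root u}
    (hplen : p.length = T.dist root u) (hy : y ∈ p.support) :
    T.dist root y ≤ T.dist root u := by
  classical
  have h1 : T.dist root y ≤ (p.takeUntil _ hy).length := dist_le _
  have h2 := congrArg Walk.length (p.take_spec hy)
  rw [Walk.length_append] at h2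
  omega

/-- in a tree, a vertex has a unique parent -/
lemma parent_unique (hT : T.IsTree) {c u u' : V} (h : T.Adj u c) (h' : T.Adj u' c)
    (hd : T.dist root c = T.dist root u + 1) (hd' : T.dist root c = T.dist root u' + 1) :
    u = u' := by
  obtain ⟨p, hp, hplen⟩ := hT.isConnected.exists_path_of_dist root u
  obtain ⟨p', hp', hplen'⟩ := hT.isConnected.exists_path_of_dist root u'
  have build : ∀ (z : V) (q : T.Walk root z) (hq : q.IsPath)
      (hqlen : q.length = T.dist root z) (hz : T.Adj z c)
      (hzd : T.dist root c = T.dist root z + 1),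
      ((q.append (Walk.cons hz Walk.nil)).IsPath ∧
        (q.append (Walk.cons hz Walk.nil)).getVert (T.dist root c - 1) = z) := by
    intro z q hq hqlen hz hzd
    have hcs : c ∉ q.support := by
      intro hc
      have := depth_support_le hT hqlen hc
      omega
    constructor
    · apply isPath_append hq
      · simp [Walk.isPath_def, hz.ne]
      · intro y hy1 hy2
        simp only [Walk.support_cons, Walk.support_nil, List.mem_cons,
          List.mem_singleton, List.not_mem_nil, or_false] at hy2
        rcases hy2 with h2 | h2
        · exact h2
        · subst h2
          exact absurd hy1 hcs
    · rw [Walk.getVert_append]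
      have : T.dist root c - 1 = q.length := by omega
      rw [this]
      simp [Walk.getVert_length]
  obtain ⟨hP1, hG1⟩ := build u p hp hplen h hd
  obtain ⟨hP2, hG2⟩ := build u' p' hp' hplen' h' hd'
  have := (hT.existsUnique_path root c).unique hP1 hP2
  rw [← hG1, ← hG2, this]

end BurnAux
end part6
section part7
namespace BurnAux

open SimpleGraph
open scoped Classical

variable {V : Type*} {T : SimpleGraph V} {root : V}

/-- choice of two (distinct, if possible) full children -/
noncomputable def cc (T : SimpleGraph V) (root : V) (u : V) (k : ℕ) : V × V :=
  if h : ∃ c1 c2, child T root u c1 ∧ child T root u c2 ∧ c1 ≠ c2 ∧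
      Full T root k c1 ∧ Full T root k c2 then
    (h.choose, h.choose_spec.choose)
  else if h1 : ∃ c, child T root u c ∧ Full T root k c then (h1.choose, h1.choose)
  else (u, u)

lemma cc_spec1 {u : V} {k : ℕ} (h : Full T root (k + 1) u) :
    (child T root u (cc T root u k).1 ∧ Full T root k (cc T root u k).1) ∧
    (child T root u (cc T root u k).2 ∧ Full T root k (cc T root u k).2) := by
  by_cases h2 : ∃ c1 c2, child T root u c1 ∧ child T root u c2 ∧ c1 ≠ c2 ∧
      Full T root k c1 ∧ Full T root k c2
  · rw [cc, dif_pos h2]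
    obtain ⟨hc1, hc2, -, hf1, hf2⟩ := h2.choose_spec.choose_spec
    exact ⟨⟨hc1, hf1⟩, ⟨hc2, hf2⟩⟩
  · rw [cc, dif_neg h2]
    have h1 : ∃ c, child T root u c ∧ Full T root k c := by
      match k with
      | 0 =>
        obtain ⟨c, hc⟩ := h
        exact ⟨c, hc, trivial⟩
      | (m + 1) =>
        obtain ⟨c1, c2, hc1, hc2, hne, hf1, hf2⟩ := h
        exact absurd ⟨c1, c2, hc1, hc2, hne, hf1, hf2⟩ h2
    rw [dif_pos h1]
    exact ⟨h1.choose_spec, h1.choose_spec⟩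

lemma cc_spec2 {u : V} {k : ℕ} (h : Full T root (k + 2) u) :
    (cc T root u (k + 1)).1 ≠ (cc T root u (k + 1)).2 := by
  obtain ⟨c1, c2, hc1, hc2, hne, hf1, hf2⟩ := h
  have h2 : ∃ c1 c2, child T root u c1 ∧ child T root u c2 ∧ c1 ≠ c2 ∧
      Full T root (k + 1) c1 ∧ Full T root (k + 1) c2 := ⟨c1, c2, hc1, hc2, hne, hf1, hf2⟩
  rw [cc, dif_pos h2]
  exact h2.choose_spec.choose_spec.2.2.1

/-- the canonical embedding of `T_r` determined by the choices `cc` -/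
noncomputable def emb (T : SimpleGraph V) (root : V) (r : ℕ) : List Bool → V
  | [] => root
  | b :: l => if b then (cc T root (emb T root r l) (r - l.length - 1)).1
      else (cc T root (emb T root r l) (r - l.length - 1)).2

lemma emb_spec (hfull : Full T root r root) : ∀ l : List Bool, l.length ≤ r →
    Full T root (r - l.length) (emb T root r l) ∧
    T.dist root (emb T root r l) = l.length
  | [] => fun _ => by
    constructor
    · simpa [emb] using hfull
    · simp [emb, SimpleGraph.dist_self]
  | b :: l => fun hlen => by
    have hl : l.length ≤ r := by simp at hlen; omega
    obtain ⟨hfl, hdl⟩ := emb_spec hfull l hl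
    have hk : r - l.length = (r - l.length - 1) + 1 := by simp at hlen; omega
    rw [hk] at hfl
    have hspec := cc_spec1 (T := T) (root := root) hfl
    have hchild : child T root (emb T root r l) (emb T root r (b :: l)) ∧
        Full T root (r - l.length - 1) (emb T root r (b :: l)) := by
      rw [emb]
      cases b
      · simpa using ⟨hspec.2.1, hspec.2.2⟩
      · simpa using ⟨hspec.1.1, hspec.1.2⟩
    constructor
    · have : r - (b :: l).length = r - l.length - 1 := by simp; omega
      rw [this]
      exact hchild.2
    · rw [hchild.1.2, hdl]
      simp

lemma emb_child (hfull : Full T root r root) {l : List Bool} {b : Bool}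
    (hlen : (b :: l).length ≤ r) :
    child T root (emb T root r l) (emb T root r (b :: l)) := by
  have hl : l.length ≤ r := by simp at hlen; omega
  obtain ⟨hfl, -⟩ := emb_spec hfull l hl
  have hk : r - l.length = (r - l.length - 1) + 1 := by simp at hlen; omega
  rw [hk] at hfl
  have hspec := cc_spec1 (T := T) (root := root) hfl
  rw [emb]
  cases b
  · simpa using hspec.2.1
  · simpa using hspec.1.1

lemma emb_ne (hfull : Full T root r root) {l : List Bool} (hlen : l.length + 2 ≤ r) :
    emb T root r (true :: l) ≠ emb T root r (false :: l) := by
  have hl : l.length ≤ r := by omega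
  obtain ⟨hfl, -⟩ := emb_spec hfull l hl
  have hk : r - l.length = (r - l.length - 2) + 2 := by omega
  rw [hk] at hfl
  have := cc_spec2 (T := T) (root := root) hfl
  have hk2 : r - l.length - 2 + 1 = r - l.length - 1 := by omega
  rw [hk2] at this
  simpa [emb] using this

lemma emb_inj (hT : T.IsTree) (hfull : Full T root r root) :
    ∀ l1 l2 : List Bool, validL r l1 → validL r l2 →
      emb T root r l1 = emb T root r l2 → l1 = l2
  | [], l2 => fun _ h2 he => by
    obtain ⟨-, hd2⟩ := emb_spec hfull l2 h2.1
    rw [← he] at hd2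
    simp [emb, SimpleGraph.dist_self] at hd2
    exact (List.eq_nil_of_length_eq_zero hd2.symm).symm
  | l1, [] => fun h1 _ he => by
    obtain ⟨-, hd1⟩ := emb_spec hfull l1 h1.1
    rw [he] at hd1
    simp [emb, SimpleGraph.dist_self] at hd1
    exact List.eq_nil_of_length_eq_zero hd1.symm
  | b1 :: t1, b2 :: t2 => fun h1 h2 he => by
    have ht1 : validL r t1 := valid_of_suffix ⟨[b1], rfl⟩ h1
    have ht2 : validL r t2 := valid_of_suffix ⟨[b2], rfl⟩ h2
    have hc1 := emb_child hfull (l := t1) (b := b1) h1.1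
    have hc2 := emb_child hfull (l := t2) (b := b2) h2.1
    rw [he] at hc1
    have hpar : emb T root r t1 = emb T root r t2 :=
      parent_unique hT hc1.1 hc2.1 hc1.2 hc2.2
    have htt : t1 = t2 := emb_inj hT hfull t1 t2 ht1 ht2 hpar
    subst htt
    -- now show the heads agree
    by_cases hb : b1 = b2
    · rw [hb]
    · exfalso
      have hlen1 := h1.1
      by_cases hfin : t1.length + 1 = r
      · have e1 := h1.2 (by simpa using hfin)
        have e2 := h2.2 (by simpa using hfin)
        simp at e1 e2
        exact hb (e1.trans e2.symm)
      · have hlen : t1.length + 2 ≤ r := by simp at hlen1; omega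
        have hne := emb_ne hfull hlen
        cases b1 <;> cases b2
        · exact hb rfl
        · exact hne (by rw [he])
        · exact hne (by rw [he])
        · exact hb rfl

/-- Direction (c): a full root yields an embedding of `T_r`. -/
lemma exists_embedding (hT : T.IsTree) {r : ℕ} (hfull : Full T root r root) :
    ∃ f : Tr r →g T, Function.Injective f := by
  refine ⟨⟨fun w => emb T root r w.val, ?_⟩, ?_⟩
  · rintro ⟨a, ha⟩ ⟨b, hb⟩ (⟨c, hc⟩ | ⟨c, hc⟩)
    · simp only at hc
      subst hc
      exact ((emb_child hfull hb.1).1)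
    · simp only at hc
      subst hc
      exact ((emb_child hfull ha.1).1).symm
  · intro a b hab
    exact Subtype.ext (emb_inj hT hfull a.val b.val a.2 b.2 hab)

end BurnAux
end part7
theorem burning_eq_succ_iff_contains_Tr {V : Type*} [Fintype V]
    (T : SimpleGraph V) (root : V) (hT : T.IsTree) (r : ℕ) (hr : 1 ≤ r)
    (hdepth : ∀ v : V, T.dist root v ≤ r) (hmax : ∃ v : V, T.dist root v = r)
    (hbin : ∀ v : V, {u : V | T.Adj v u ∧ T.dist root u = T.dist root v + 1}.ncard ≤ 2) :
    burningNumber T = r + 1 ↔ ∃ f : Tr r →g T, Function.Injective f := by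
  classical
  set S := {k | ∃ x : Fin k → V, ∀ v : V, ∃ i : Fin k, v ∈ ball T (x i) (k - 1 - (i : ℕ))}
    with hS
  have hBN : burningNumber T = sInf S := rfl
  -- upward closure of S
  have hup : ∀ k, k ∈ S → k + 1 ∈ S := by
    rintro k ⟨x, hx⟩
    refine ⟨Fin.cases root x, fun v => ?_⟩
    obtain ⟨i, hi⟩ := hx v
    refine ⟨i.succ, ?_⟩
    have h1 : (Fin.cases root x : Fin (k+1) → V) i.succ = x i := by simp
    have h2 : k + 1 - 1 - ((i.succ : Fin (k+1)) : ℕ) = k - 1 - (i : ℕ) := by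
      simp [Fin.val_succ]
      omega
    rw [h1, h2]
    exact hi
  have hclose : ∀ m k, k ∈ S → k ≤ m → m ∈ S := by
    intro m
    induction m with
    | zero => intro k hk hle; simpa [Nat.le_zero.mp hle] using hk
    | succ m ih =>
      intro k hk hle
      rcases Nat.lt_or_ge k (m + 1) with h | h
      · exact hup m (ih k hk (by omega))
      · have : k = m + 1 := by omega
        rwa [← this]
  have hmem : r + 1 ∈ S := by
    refine ⟨fun _ => root, fun v => ?_⟩
    refine ⟨0, hT.isConnected root v, ?_⟩
    simpa using hdepth v
  -- the main equivalence: no cover of length r ↔ T_r embeds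
  have main : r ∉ S ↔ ∃ f : Tr r →g T, Function.Injective f := by
    constructor
    · intro hnS
      have hfull : BurnAux.Full T root r root := by
        by_contra hnf
        obtain ⟨x, hx⟩ := BurnAux.coverSub hT hbin r root
          (fun v _ => hdepth v) hnf
        refine hnS ⟨x, fun v => ?_⟩
        have hsub : BurnAux.inSub T root root v := by
          unfold BurnAux.inSub
          rw [SimpleGraph.dist_self]
          omega
        obtain ⟨i, hi⟩ := hx v hsub
        exact ⟨i, hT.isConnected (x i) v, hi⟩
      exact BurnAux.exists_embedding hT hfull
    · rintro ⟨f, hf⟩ hrS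
      obtain ⟨x, hx⟩ := hrS
      exact BurnAux.no_cover hT hr f hf x (fun v => by
        obtain ⟨i, hi⟩ := hx v
        exact ⟨i, hi.2⟩)
  rw [hBN]
  constructor
  · intro hinf
    rw [← main]
    intro hrS
    have := Nat.sInf_le hrS
    omega
  · intro hemb
    have hnS : r ∉ S := main.mpr hemb
    have h1 : sInf S ≤ r + 1 := Nat.sInf_le hmem
    have h2 : sInf S ∈ S := Nat.sInf_mem ⟨r + 1, hmem⟩
    rcases Nat.lt_or_ge (sInf S) (r + 1) with h | h
    · exact absurd (hclose r _ h2 (by omega)) hnS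
    · omega
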